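/- Let G be a group acting on a set X, let 𝕎 be a G-invariant wallspace structure on X, and let X̃ be the CAT(0) cube complex dual to 𝕎. Then there is a G-equivariant bijection between 𝕎 and the set of hyperplanes of X̃, and for any two vertices v, w of X̃ the combinatorial distance d_{X̃}(v, w) equals the number of walls W ∈ 𝕎 on which the orientations v and w differ, i.e., #{W ∈ 𝕎 : v(W) ≠ w(W)}. -/

import Mathlib

open scoped Pointwise

/-- A wall of a set `X`: an unordered pair `{U, U*}` of nonempty proper subsets covering
`X`. -/
def IsWall {X : Type*} (W : Set (Set X)) : Prop :=
  ∃ U Uc : Set X, U ≠ Uc ∧ W = {U, Uc} ∧ U.Nonempty ∧ Uc.Nonempty ∧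
    U ∪ Uc = Set.univ ∧ U ≠ Set.univ ∧ Uc ≠ Set.univ

/-- A wall separates `x` and `y` if they lie in distinct open halfspaces. -/
def WallSeparates {X : Type*} (W : Set (Set X)) (x y : X) : Prop :=
  ∃ U ∈ W, ∃ V ∈ W, U ≠ V ∧ x ∈ U ∧ x ∉ V ∧ y ∈ V ∧ y ∉ U

/-- A wallspace structure: a set of walls such that each point lies in both halfspaces of
only finitely many walls, and any two points are separated by only finitely many walls. -/
def IsWallspace {X : Type*} (𝕎 : Set (Set (Set X))) : Prop :=
  (∀ W ∈ 𝕎, IsWall W) ∧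
  (∀ x : X, {W ∈ 𝕎 | ∀ U ∈ W, x ∈ U}.Finite) ∧
  (∀ x y : X, {W ∈ 𝕎 | WallSeparates W x y}.Finite)

/-- Vertices of the CAT(0) cube complex dual to a wallspace: consistent orientations of
the walls differing from a canonical orientation on only finitely many walls. -/
def DualVertex {X : Type*} (𝕎 : Set (Set (Set X))) : Type _ :=
  {v : 𝕎 → Set X //
    (∀ W : 𝕎, v W ∈ (W : Set (Set X))) ∧
    (∀ W W' : 𝕎, (v W ∩ v W').Nonempty) ∧
    (∃ x : X, {W : 𝕎 | x ∉ v W}.Finite)}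

/-- The 1-skeleton of the dual CAT(0) cube complex: two vertices are adjacent iff they
differ on exactly one wall. -/
def dualGraph {X : Type*} (𝕎 : Set (Set (Set X))) : SimpleGraph (DualVertex 𝕎) where
  Adj v w := ∃! W : 𝕎, v.1 W ≠ w.1 W
  symm := by
    constructor
    rintro v w ⟨W, hW, hU⟩
    exact ⟨W, hW.symm, fun W' h' => hU W' h'.symm⟩
  loopless := by
    constructor
    rintro v ⟨W, hW, -⟩
    exact hW rfl

namespace SageevAux

variable {X : Type*} {𝕎 : Set (Set (Set X))}

/-- If `A, B` are distinct members of a wall, they are the two halfspaces. -/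
lemma wall_eq_pair (hws : IsWallspace 𝕎) (W : 𝕎) {A B : Set X}
    (hA : A ∈ (W : Set (Set X))) (hB : B ∈ (W : Set (Set X))) (hAB : A ≠ B) :
    (W : Set (Set X)) = {A, B} ∧ A ∪ B = Set.univ ∧ A.Nonempty ∧ B.Nonempty := by
  obtain ⟨U, Uc, hne, hWeq, hU, hUc, huniv, -, -⟩ := hws.1 W.1 W.2
  rw [hWeq] at hA hB ⊢
  simp only [Set.mem_insert_iff, Set.mem_singleton_iff] at hA hB
  rcases hA with rfl | rfl <;> rcases hB with rfl | rfl
  · exact absurd rfl hAB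
  · exact ⟨rfl, huniv, hU, hUc⟩
  · exact ⟨by rw [Set.pair_comm], by rw [Set.union_comm]; exact huniv, hUc, hU⟩
  · exact absurd rfl hAB

lemma halves_union (hws : IsWallspace 𝕎) (W : 𝕎) {A B : Set X}
    (hA : A ∈ (W : Set (Set X))) (hB : B ∈ (W : Set (Set X))) (hAB : A ≠ B) :
    A ∪ B = Set.univ := (wall_eq_pair hws W hA hB hAB).2.1

lemma half_nonempty (hws : IsWallspace 𝕎) (W : 𝕎) {A : Set X}
    (hA : A ∈ (W : Set (Set X))) : A.Nonempty := by
  obtain ⟨U, Uc, hne, hWeq, hU, hUc, -, -, -⟩ := hws.1 W.1 W.2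
  rw [hWeq] at hA
  rcases hA with rfl | hA
  · exact hU
  · rw [Set.mem_singleton_iff] at hA; subst hA; exact hUc

/-- The set of walls on which two vertices differ is finite. -/
lemma diff_finite (hws : IsWallspace 𝕎) (v w : DualVertex 𝕎) :
    {W : 𝕎 | v.1 W ≠ w.1 W}.Finite := by
  obtain ⟨x, hx⟩ := v.2.2.2
  obtain ⟨y, hy⟩ := w.2.2.2
  have hinj : ∀ s : Set (Set (Set X)),
      s.Finite → ((Subtype.val : 𝕎 → Set (Set X)) ⁻¹' s).Finite :=
    fun s hs => hs.preimage (Subtype.coe_injective.injOn)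
  have hsub : {W : 𝕎 | v.1 W ≠ w.1 W} ⊆
      {W : 𝕎 | x ∉ v.1 W} ∪ {W : 𝕎 | y ∉ w.1 W} ∪
      (Subtype.val ⁻¹' {W ∈ 𝕎 | ∀ U ∈ W, x ∈ U}) ∪
      (Subtype.val ⁻¹' {W ∈ 𝕎 | ∀ U ∈ W, y ∈ U}) ∪
      (Subtype.val ⁻¹' {W ∈ 𝕎 | WallSeparates W x y}) := by
    intro W hW
    have hmem : ∀ U ∈ (W : Set (Set X)), U = v.1 W ∨ U = w.1 W := by
      intro U hU
      have := (wall_eq_pair hws W (v.2.1 W) (w.2.1 W) hW).1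
      rw [this] at hU
      simpa using hU
    by_cases hxv : x ∈ v.1 W
    · by_cases hyw : y ∈ w.1 W
      · by_cases hxw : x ∈ w.1 W
        · -- x belongs to both halfspaces of W
          left; left; right
          refine ⟨W.2, fun U hU => ?_⟩
          rcases hmem U hU with rfl | rfl
          · exact hxv
          · exact hxw
        · by_cases hyv : y ∈ v.1 W
          · -- y belongs to both halfspaces of W
            left; right
            refine ⟨W.2, fun U hU => ?_⟩
            rcases hmem U hU with rfl | rfl
            · exact hyv
            · exact hyw
          · -- W separates x and y
            right
            exact ⟨W.2, v.1 W, v.2.1 W, w.1 W, w.2.1 W, hW, hxv, hxw, hyw, hyv⟩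
      · left; left; left; right; exact hyw
    · left; left; left; left; exact hxv
  exact Set.Finite.subset
    ((((hx.union hy).union (hinj _ (hws.2.1 x))).union (hinj _ (hws.2.1 y))).union
      (hinj _ (hws.2.2 x y))) hsub

/-- Crux of Sageev's construction: if `v ≠ w`, some wall on which they differ can be
flipped in `v` towards `w`. -/
lemma exists_flip (hws : IsWallspace 𝕎) (v w : DualVertex 𝕎) {W : 𝕎}
    (hW : v.1 W ≠ w.1 W) :
    ∃ W₀ : 𝕎, v.1 W₀ ≠ w.1 W₀ ∧
      ∀ W' : 𝕎, W' ≠ W₀ → (w.1 W₀ ∩ v.1 W').Nonempty := by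
  by_contra hcon
  push_neg at hcon
  set D := {W : 𝕎 | v.1 W ≠ w.1 W} with hD
  have hDfin : D.Finite := diff_finite hws v w
  have hDne : D.Nonempty := ⟨W, hW⟩
  -- every wall in D has a "blocker" in D
  have hblock : ∀ W₀ ∈ D, ∃ W₁ ∈ D, W₁ ≠ W₀ ∧ w.1 W₀ ∩ v.1 W₁ = ∅ := by
    intro W₀ hW₀
    obtain ⟨W₁, hne₁, hint⟩ := hcon W₀ hW₀
    refine ⟨W₁, ?_, hne₁, hint⟩
    by_contra hW₁
    simp only [hD, Set.mem_setOf_eq, not_not] at hW₁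
    have hne' := w.2.2.1 W₀ W₁
    rw [← hW₁, hint] at hne'
    exact Set.not_nonempty_empty hne'
  -- pick W₀ ∈ D with w-side maximal
  obtain ⟨W₀, hW₀D, hmax'⟩ := Set.Finite.exists_maximalFor (fun W => w.1 W) D hDfin hDne
  have hmax : ∀ W₁ ∈ D, w.1 W₀ ⊆ w.1 W₁ → w.1 W₀ = w.1 W₁ :=
    fun W₁ h1 h2 => le_antisymm h2 (hmax' h1 h2)
  -- any blocked wall has w-side `w W₀` and v-side its complement
  have key : ∀ W₁ ∈ D, w.1 W₀ ∩ v.1 W₁ = ∅ →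
      w.1 W₁ = w.1 W₀ ∧ v.1 W₁ = (w.1 W₀)ᶜ := by
    intro W₁ hW₁D hint
    have huniv : v.1 W₁ ∪ w.1 W₁ = Set.univ :=
      halves_union hws W₁ (v.2.1 W₁) (w.2.1 W₁) hW₁D
    have hsub : w.1 W₀ ⊆ w.1 W₁ := by
      intro z hz
      have hz' : z ∉ v.1 W₁ := fun hzv =>
        Set.eq_empty_iff_forall_notMem.mp hint z ⟨hz, hzv⟩
      have hz'' : z ∈ v.1 W₁ ∪ w.1 W₁ := huniv ▸ Set.mem_univ z
      rcases hz'' with h | h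
      · exact absurd h hz'
      · exact h
    have heq : w.1 W₀ = w.1 W₁ := hmax W₁ hW₁D hsub
    refine ⟨heq.symm, ?_⟩
    apply Set.eq_of_subset_of_subset
    · intro z hz hzw
      exact Set.eq_empty_iff_forall_notMem.mp hint z ⟨hzw, hz⟩
    · intro z hz
      have hz'' : z ∈ v.1 W₁ ∪ w.1 W₁ := huniv ▸ Set.mem_univ z
      rcases hz'' with h | h
      · exact h
      · exact absurd (heq ▸ h) hz
  obtain ⟨W₁, hW₁D, hne₁, hint₁⟩ := hblock W₀ hW₀D
  obtain ⟨hw₁, hv₁⟩ := key W₁ hW₁D hint₁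
  -- a blocker of W₁ satisfies the same description, hence equals W₁: contradiction
  obtain ⟨W₂, hW₂D, hne₂, hint₂⟩ := hblock W₁ hW₁D
  have hint₂' : w.1 W₀ ∩ v.1 W₂ = ∅ := by rwa [hw₁] at hint₂
  obtain ⟨hw₂, hv₂⟩ := key W₂ hW₂D hint₂'
  have h₁ : (W₁ : Set (Set X)) = {v.1 W₁, w.1 W₁} :=
    (wall_eq_pair hws W₁ (v.2.1 W₁) (w.2.1 W₁) hW₁D).1
  have h₂ : (W₂ : Set (Set X)) = {v.1 W₂, w.1 W₂} :=
    (wall_eq_pair hws W₂ (v.2.1 W₂) (w.2.1 W₂) hW₂D).1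
  apply hne₂
  apply Subtype.ext
  rw [h₁, h₂, hv₁, hv₂, hw₁, hw₂]

/-- Flipping a flippable wall yields an adjacent vertex. -/
lemma flip (hws : IsWallspace 𝕎) (v w : DualVertex 𝕎) {W₀ : 𝕎}
    (h1 : v.1 W₀ ≠ w.1 W₀)
    (h2 : ∀ W' : 𝕎, W' ≠ W₀ → (w.1 W₀ ∩ v.1 W').Nonempty) :
    ∃ v' : DualVertex 𝕎, (dualGraph 𝕎).Adj v v' ∧ v'.1 W₀ = w.1 W₀ ∧
      ∀ W' : 𝕎, W' ≠ W₀ → v'.1 W' = v.1 W' := by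
  classical
  refine ⟨⟨fun W => if W = W₀ then w.1 W₀ else v.1 W, ?_, ?_, ?_⟩, ?_, ?_, ?_⟩
  · intro W
    dsimp only
    by_cases h : W = W₀
    · rw [if_pos h, h]; exact w.2.1 W₀
    · rw [if_neg h]; exact v.2.1 W
  · intro W W'
    dsimp only
    by_cases h : W = W₀ <;> by_cases h' : W' = W₀
    · rw [if_pos h, if_pos h']; exact w.2.2.1 W₀ W₀
    · rw [if_pos h, if_neg h']; exact h2 W' h'
    · rw [if_pos h', if_neg h, Set.inter_comm]; exact h2 W h
    · rw [if_neg h, if_neg h']; exact v.2.2.1 W W'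
  · obtain ⟨x, hx⟩ := v.2.2.2
    refine ⟨x, Set.Finite.subset (hx.union (Set.finite_singleton W₀)) ?_⟩
    intro W hW
    simp only [Set.mem_setOf_eq] at hW
    by_cases h : W = W₀
    · right; simp [h]
    · left
      rw [if_neg h] at hW
      exact hW
  · refine ⟨W₀, ?_, ?_⟩
    · show v.1 W₀ ≠ if W₀ = W₀ then w.1 W₀ else v.1 W₀
      rw [if_pos rfl]; exact h1
    · intro W hW
      by_contra h
      simp only [if_neg h] at hW
      exact hW rfl
  · show (if W₀ = W₀ then w.1 W₀ else v.1 W₀) = w.1 W₀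
    rw [if_pos rfl]
  · intro W' h
    show (if W' = W₀ then w.1 W₀ else v.1 W') = v.1 W'
    rw [if_neg h]

/-- A vertex whose halfspaces all contain a given point. -/
lemma principal (hws : IsWallspace 𝕎) (x : X) :
    ∃ v : DualVertex 𝕎, ∀ W : 𝕎, x ∈ v.1 W := by
  have hch : ∀ W : 𝕎, ∃ A, A ∈ (W : Set (Set X)) ∧ x ∈ A := by
    intro W
    obtain ⟨U, Uc, hne, hWeq, -, -, huniv, -, -⟩ := hws.1 W.1 W.2
    have : x ∈ U ∪ Uc := huniv ▸ Set.mem_univ x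
    rcases this with h | h
    · exact ⟨U, by rw [hWeq]; left; rfl, h⟩
    · exact ⟨Uc, by rw [hWeq]; right; rfl, h⟩
  refine ⟨⟨fun W => (hch W).choose, fun W => (hch W).choose_spec.1, ?_, ⟨x, ?_⟩⟩,
    fun W => (hch W).choose_spec.2⟩
  · exact fun W W' => ⟨x, (hch W).choose_spec.2, (hch W').choose_spec.2⟩
  · convert Set.finite_empty
    ext W
    simp [(hch W).choose_spec.2]

/-- Upper bound: vertices differing on `n` walls are connected at distance `≤ n`. -/
lemma reach_and_dist_le (hws : IsWallspace 𝕎) :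
    ∀ n : ℕ, ∀ v w : DualVertex 𝕎, {W : 𝕎 | v.1 W ≠ w.1 W}.ncard = n →
      (dualGraph 𝕎).Reachable v w ∧ (dualGraph 𝕎).dist v w ≤ n := by
  intro n
  induction n with
  | zero =>
    intro v w h
    have hD : {W : 𝕎 | v.1 W ≠ w.1 W} = ∅ :=
      (Set.ncard_eq_zero (diff_finite hws v w)).mp h
    have hvw : v = w := by
      apply Subtype.ext
      funext W
      by_contra hne
      exact Set.eq_empty_iff_forall_notMem.mp hD W hne
    subst hvw
    exact ⟨SimpleGraph.Reachable.refl v, by simp⟩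
  | succ n ih =>
    intro v w h
    have hne : ∃ W : 𝕎, v.1 W ≠ w.1 W := by
      by_contra h'
      push_neg at h'
      have : {W : 𝕎 | v.1 W ≠ w.1 W} = ∅ := by
        ext W; simp [h' W]
      rw [this] at h
      simp at h
    obtain ⟨W, hW⟩ := hne
    obtain ⟨W₀, hW₀, hflip⟩ := exists_flip hws v w hW
    obtain ⟨v', hadj, hv'W₀, hv'⟩ := flip hws v w hW₀ hflip
    have hDeq : {W' : 𝕎 | v'.1 W' ≠ w.1 W'} = {W' : 𝕎 | v.1 W' ≠ w.1 W'} \ {W₀} := by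
      ext W'
      by_cases hW' : W' = W₀
      · subst hW'; simp [hv'W₀]
      · simp [hW', hv' W' hW']
    have hcard : {W' : 𝕎 | v'.1 W' ≠ w.1 W'}.ncard = n := by
      rw [hDeq, Set.ncard_diff_singleton_of_mem
        (show W₀ ∈ {W' : 𝕎 | v.1 W' ≠ w.1 W'} from hW₀), h]
      omega
    obtain ⟨hreach, hdist⟩ := ih v' w hcard
    refine ⟨hadj.reachable.trans hreach, ?_⟩
    obtain ⟨p, hp⟩ := hreach.exists_walk_length_eq_dist
    calc (dualGraph 𝕎).dist v w ≤ (SimpleGraph.Walk.cons hadj p).length :=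
          SimpleGraph.dist_le _
      _ = p.length + 1 := by simp
      _ ≤ n + 1 := by omega

/-- Lower bound: any walk is at least as long as the number of differing walls. -/
lemma ncard_le_length (hws : IsWallspace 𝕎) {v w : DualVertex 𝕎}
    (p : (dualGraph 𝕎).Walk v w) :
    {W : 𝕎 | v.1 W ≠ w.1 W}.ncard ≤ p.length := by
  induction p with
  | nil =>
    simp only [ne_eq, not_true_eq_false, Set.setOf_false, Set.ncard_empty,
      SimpleGraph.Walk.length_nil, le_refl]
  | @cons a b c hadj q ih =>
    obtain ⟨W₀, hW₀, huniq⟩ := id hadj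
    have hsub : {W : 𝕎 | a.1 W ≠ c.1 W} ⊆ {W₀} ∪ {W : 𝕎 | b.1 W ≠ c.1 W} := by
      intro W hW
      by_cases h : a.1 W = b.1 W
      · right; intro hbc; exact hW (h.trans hbc)
      · left; exact huniq W h
    calc {W : 𝕎 | a.1 W ≠ c.1 W}.ncard
        ≤ ({W₀} ∪ {W : 𝕎 | b.1 W ≠ c.1 W} : Set 𝕎).ncard :=
          Set.ncard_le_ncard hsub ((Set.finite_singleton W₀).union (diff_finite hws b c))
      _ ≤ ({W₀} : Set 𝕎).ncard + {W : 𝕎 | b.1 W ≠ c.1 W}.ncard := Set.ncard_union_le _ _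
      _ ≤ 1 + q.length := by rw [Set.ncard_singleton]; omega
      _ = (SimpleGraph.Walk.cons hadj q).length := by
          rw [SimpleGraph.Walk.length_cons]; omega

/-- Every wall is crossed by some edge. -/
lemma exists_edge (hws : IsWallspace 𝕎) :
    ∀ n : ℕ, ∀ v w : DualVertex 𝕎, ∀ W : 𝕎,
      {W' : 𝕎 | v.1 W' ≠ w.1 W'}.ncard = n → v.1 W ≠ w.1 W →
      ∃ a b : DualVertex 𝕎, (dualGraph 𝕎).Adj a b ∧ a.1 W ≠ b.1 W := by
  intro n
  induction n with
  | zero =>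
    intro v w W h hW
    exfalso
    have hD : {W' : 𝕎 | v.1 W' ≠ w.1 W'} = ∅ :=
      (Set.ncard_eq_zero (diff_finite hws v w)).mp h
    exact Set.eq_empty_iff_forall_notMem.mp hD W hW
  | succ n ih =>
    intro v w W h hW
    obtain ⟨W₀, hW₀, hflip⟩ := exists_flip hws v w hW
    obtain ⟨v', hadj, hv'W₀, hv'⟩ := flip hws v w hW₀ hflip
    by_cases hWW₀ : W = W₀
    · subst hWW₀
      exact ⟨v, v', hadj, by rw [hv'W₀]; exact hW⟩
    · have hDeq : {W' : 𝕎 | v'.1 W' ≠ w.1 W'} = {W' : 𝕎 | v.1 W' ≠ w.1 W'} \ {W₀} := by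
        ext W'
        by_cases hW' : W' = W₀
        · subst hW'; simp [hv'W₀]
        · simp [hW', hv' W' hW']
      have hcard : {W' : 𝕎 | v'.1 W' ≠ w.1 W'}.ncard = n := by
        rw [hDeq, Set.ncard_diff_singleton_of_mem
          (show W₀ ∈ {W' : 𝕎 | v.1 W' ≠ w.1 W'} from hW₀), h]
        omega
      exact ih v' w W hcard (by rw [hv' W hWW₀]; exact hW)

end SageevAux

/-- Sageev's construction: for a `G`-invariant wallspace `𝕎` on a `G`-set `X`, there is a
`G`-equivariant bijection between walls and hyperplanes of the dual cube complex (each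
edge is dual to a unique wall, every wall is dual to an edge, equivariantly), and the
combinatorial distance between two vertices equals the number of walls on which their
orientations differ. -/
theorem sageev_dual_cube_complex
    {G X : Type*} [Group G] [MulAction G X]
    (𝕎 : Set (Set (Set X))) (hws : IsWallspace 𝕎)
    (hGinv : ∀ (g : G), ∀ W ∈ 𝕎, g • W ∈ 𝕎) :
    (∀ v w : DualVertex 𝕎, (dualGraph 𝕎).Adj v w → ∃! W : 𝕎, v.1 W ≠ w.1 W) ∧
    (∀ W : 𝕎, ∃ v w : DualVertex 𝕎, (dualGraph 𝕎).Adj v w ∧ v.1 W ≠ w.1 W) ∧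
    (∃ act : G → DualVertex 𝕎 → DualVertex 𝕎,
      (∀ (g : G) (v : DualVertex 𝕎) (W : 𝕎),
        (act g v).1 W = g • v.1 ⟨g⁻¹ • (W : Set (Set X)), hGinv g⁻¹ _ W.2⟩) ∧
      (∀ (g : G) (v w : DualVertex 𝕎),
        (dualGraph 𝕎).Adj v w → (dualGraph 𝕎).Adj (act g v) (act g w)) ∧
      (∀ (g : G) (v w : DualVertex 𝕎) (W : 𝕎), v.1 W ≠ w.1 W →
        (act g v).1 ⟨g • (W : Set (Set X)), hGinv g _ W.2⟩ ≠
          (act g w).1 ⟨g • (W : Set (Set X)), hGinv g _ W.2⟩)) ∧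
    (∀ v w : DualVertex 𝕎,
      (dualGraph 𝕎).dist v w = {W : 𝕎 | v.1 W ≠ w.1 W}.ncard) := by
  classical
  -- the equivariant maps on walls
  set ψ : G → 𝕎 → 𝕎 := fun g W => ⟨g⁻¹ • (W : Set (Set X)), hGinv g⁻¹ _ W.2⟩ with hψ
  set φ : G → 𝕎 → 𝕎 := fun g W => ⟨g • (W : Set (Set X)), hGinv g _ W.2⟩ with hφ
  have hψφ : ∀ (g : G) (W : 𝕎), ψ g (φ g W) = W := by
    intro g W
    apply Subtype.ext
    simp only [hψ, hφ]
    exact inv_smul_smul g (W : Set (Set X))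
  have hφψ : ∀ (g : G) (W : 𝕎), φ g (ψ g W) = W := by
    intro g W
    apply Subtype.ext
    simp only [hψ, hφ]
    exact smul_inv_smul g (W : Set (Set X))
  have hsmul_ne : ∀ (g : G) (A B : Set X), A ≠ B → g • A ≠ g • B := by
    intro g A B hAB h
    apply hAB
    have := congrArg (fun s => g⁻¹ • s) h
    simpa [inv_smul_smul] using this
  -- the action on vertices
  have hactv : ∀ (g : G) (v : DualVertex 𝕎),
      (∀ W : 𝕎, (fun W : 𝕎 => g • v.1 (ψ g W)) W ∈ (W : Set (Set X))) ∧
      (∀ W W' : 𝕎, ((fun W : 𝕎 => g • v.1 (ψ g W)) W ∩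
        (fun W : 𝕎 => g • v.1 (ψ g W)) W').Nonempty) ∧
      (∃ x : X, {W : 𝕎 | x ∉ (fun W : 𝕎 => g • v.1 (ψ g W)) W}.Finite) := by
    intro g v
    refine ⟨?_, ?_, ?_⟩
    · intro W
      have h1 : v.1 (ψ g W) ∈ g⁻¹ • (W : Set (Set X)) := v.2.1 (ψ g W)
      have h2 : g • v.1 (ψ g W) ∈ g • g⁻¹ • (W : Set (Set X)) :=
        Set.smul_mem_smul_set h1
      rwa [smul_inv_smul] at h2
    · intro W W'
      have := (v.2.2.1 (ψ g W) (ψ g W')).smul_set (a := g)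
      rwa [Set.smul_set_inter] at this
    · obtain ⟨x, hx⟩ := v.2.2.2
      refine ⟨g • x, ?_⟩
      have heq : {W : 𝕎 | g • x ∉ g • v.1 (ψ g W)} = ψ g ⁻¹' {W : 𝕎 | x ∉ v.1 W} := by
        ext W
        simp only [Set.mem_setOf_eq, Set.mem_preimage, Set.smul_mem_smul_set_iff]
      rw [heq]
      apply hx.preimage
      intro W _ W' _ hWW'
      have := congrArg (φ g) hWW'
      rwa [hφψ, hφψ] at this
  set act : G → DualVertex 𝕎 → DualVertex 𝕎 :=
    fun g v => ⟨fun W => g • v.1 (ψ g W), hactv g v⟩ with hact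
  refine ⟨fun v w h => h, ?_, ⟨act, fun g v W => rfl, ?_, ?_⟩, ?_⟩
  · -- every wall dual to an edge
    intro W
    obtain ⟨U, Uc, hne, hWeq, hU, hUc, huniv, hUproper, hUcproper⟩ := hws.1 W.1 W.2
    obtain ⟨x, hx⟩ : ∃ x, x ∉ Uc := by
      by_contra h
      push_neg at h
      exact hUcproper (Set.eq_univ_iff_forall.mpr h)
    obtain ⟨y, hy⟩ : ∃ y, y ∉ U := by
      by_contra h
      push_neg at h
      exact hUproper (Set.eq_univ_iff_forall.mpr h)
    obtain ⟨v, hv⟩ := SageevAux.principal (𝕎 := 𝕎) hws x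
    obtain ⟨w, hw⟩ := SageevAux.principal (𝕎 := 𝕎) hws y
    have hvW : v.1 W = U := by
      have h1 : v.1 W ∈ (W : Set (Set X)) := v.2.1 W
      rw [hWeq] at h1
      rcases h1 with h1 | h1
      · exact h1
      · rw [Set.mem_singleton_iff] at h1
        exact absurd (h1 ▸ hv W) hx
    have hwW : w.1 W = Uc := by
      have h1 : w.1 W ∈ (W : Set (Set X)) := w.2.1 W
      rw [hWeq] at h1
      rcases h1 with h1 | h1
      · exact absurd (h1 ▸ hw W) hy
      · rwa [Set.mem_singleton_iff] at h1
    have hdiff : v.1 W ≠ w.1 W := by rw [hvW, hwW]; exact hne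
    obtain ⟨a, b, hab, habW⟩ := SageevAux.exists_edge hws
      {W' : 𝕎 | v.1 W' ≠ w.1 W'}.ncard v w W rfl hdiff
    exact ⟨a, b, hab, habW⟩
  · -- adjacency is preserved
    intro g v w hadj
    obtain ⟨W₀, hW₀, huniq⟩ := id hadj
    refine ⟨φ g W₀, ?_, ?_⟩
    · show g • v.1 (ψ g (φ g W₀)) ≠ g • w.1 (ψ g (φ g W₀))
      rw [hψφ]
      exact hsmul_ne g _ _ hW₀
    · intro W hW
      have hW' : v.1 (ψ g W) ≠ w.1 (ψ g W) := by
        intro h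
        exact hW (by show g • v.1 (ψ g W) = g • w.1 (ψ g W); rw [h])
      have := huniq (ψ g W) hW'
      have := congrArg (φ g) this
      rwa [hφψ] at this
  · -- wall-crossing is preserved
    intro g v w W hW
    show g • v.1 (ψ g (φ g W)) ≠ g • w.1 (ψ g (φ g W))
    rw [hψφ]
    exact hsmul_ne g _ _ hW
  · -- distance formula
    intro v w
    apply le_antisymm
    · exact (SageevAux.reach_and_dist_le hws {W : 𝕎 | v.1 W ≠ w.1 W}.ncard v w rfl).2
    · have hreach : (dualGraph 𝕎).Reachable v w :=
        (SageevAux.reach_and_dist_le hws {W : 𝕎 | v.1 W ≠ w.1 W}.ncard v w rfl).1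
      obtain ⟨p, hp⟩ := hreach.exists_walk_length_eq_dist
      rw [← hp]
      exact SageevAux.ncard_le_length hws p
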